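/- If B = (X, Y, R) is a finite bipartite graph, then its matching number equals |X| minus the supremum over all subsets S ⊆ X of |S| − |N(S)|, where N(S) denotes the set of neighbors of S in Y. -/

import Mathlib

/-- Quantitative Hall theorem: the matching number of a finite bipartite graph `(X, Y, R)`
equals `|X| - sup_{S ⊆ X} (|S| - |N(S)|)`. -/
theorem stmt_1 {X Y : Type*} [Fintype X] [Fintype Y] (R : X → Y → Prop) :
    sSup {n : ℕ | ∃ (D : Finset X) (φ : X → Y), Set.InjOn φ ↑D ∧
        (∀ x ∈ D, R x (φ x)) ∧ D.card = n}
      = Fintype.card X -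
        sSup {k : ℕ | ∃ S : Finset X,
          k = S.card - Nat.card {y : Y | ∃ x ∈ S, R x y}} := by
  classical
  set M := {n : ℕ | ∃ (D : Finset X) (φ : X → Y), Set.InjOn φ ↑D ∧
        (∀ x ∈ D, R x (φ x)) ∧ D.card = n} with hM
  set K := {k : ℕ | ∃ S : Finset X,
          k = S.card - Nat.card {y : Y | ∃ x ∈ S, R x y}} with hK
  -- neighbor finset
  set N : Finset X → Finset Y := fun S => Finset.univ.filter (fun y => ∃ x ∈ S, R x y) with hN
  have hNcard : ∀ S : Finset X, Nat.card {y : Y | ∃ x ∈ S, R x y} = (N S).card := by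
    intro S
    rw [Nat.card_eq_fintype_card]
    simp [hN, Fintype.card_subtype]
  have hKmem : ∀ S : Finset X, (S.card - (N S).card) ∈ K := by
    intro S; exact ⟨S, by rw [hNcard]⟩
  have hKbdd : BddAbove K := by
    refine ⟨Fintype.card X, fun k hk => ?_⟩
    obtain ⟨S, rfl⟩ := hk
    have := S.card_le_univ
    omega
  have hKne : K.Nonempty := ⟨0, ⟨∅, by simp⟩⟩
  set d := sSup K with hd
  have hdK : ∀ S : Finset X, S.card - (N S).card ≤ d := fun S => le_csSup hKbdd (hKmem S)
  have hMbdd : BddAbove M := by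
    refine ⟨Fintype.card X, fun n hn => ?_⟩
    obtain ⟨D, φ, _, _, rfl⟩ := hn
    have := D.card_le_univ
    simpa using this
  -- upper bound: every matching size is ≤ card X - d
  have hub : sSup M ≤ Fintype.card X - d := by
    rcases M.eq_empty_or_nonempty with h | h
    · rw [h, csSup_empty]; exact Nat.zero_le _
    refine csSup_le h ?_
    rintro n ⟨D, φ, hinj, hR, rfl⟩
    have hDle : ∀ k ∈ K, k ≤ Fintype.card X - D.card := by
      rintro k ⟨S, rfl⟩
      rw [hNcard]
      have h1 : (D ∩ S).card ≤ (N S).card := by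
        refine Finset.card_le_card_of_injOn φ ?_ ?_
        · intro x hx
          simp only [Finset.mem_coe, Finset.mem_inter] at hx
          simp only [hN, Finset.mem_coe, Finset.mem_filter, Finset.mem_univ, true_and]
          exact ⟨x, hx.2, hR x hx.1⟩
        · intro a ha b hb hab
          rw [Finset.coe_inter] at ha hb
          exact hinj ha.1 hb.1 hab
      have h2 : (D \ S).card ≤ (Finset.univ \ S).card :=
        Finset.card_le_card (Finset.sdiff_subset_sdiff (Finset.subset_univ D) le_rfl)
      have h3 : (D ∩ S).card + (D \ S).card = D.card := Finset.card_inter_add_card_sdiff D S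
      have h4 : (Finset.univ \ S).card = Fintype.card X - S.card := by
        rw [Finset.card_sdiff_of_subset (Finset.subset_univ S), Finset.card_univ]
      have h5 : S.card ≤ Fintype.card X := by
        have := S.card_le_univ; simpa using this
      omega
    have hdle : d ≤ Fintype.card X - D.card := csSup_le hKne hDle
    have hDle' : D.card ≤ Fintype.card X := by
      have := D.card_le_univ; simpa using this
    omega
  -- lower bound
  have hlb : Fintype.card X - d ≤ sSup M := by
    rcases isEmpty_or_nonempty Y with hY | hY
    · -- Y empty: card X ≤ d, so LHS = 0
      have : Fintype.card X ≤ d := by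
        have h0 : (N Finset.univ).card = 0 := by
          simp [hN, Finset.card_eq_zero, Finset.eq_empty_iff_forall_notMem]
        have := hdK Finset.univ
        rw [h0] at this
        simpa [Finset.card_univ] using this
      omega
    · obtain ⟨y0⟩ := hY
      -- dummy-vertex construction
      set t : X → Finset (Y ⊕ Fin d) := fun x =>
        ((Finset.univ.filter (fun y => R x y)).image Sum.inl) ∪
          (Finset.univ.image Sum.inr) with ht
      have hall : ∀ s : Finset X, s.card ≤ (s.biUnion t).card := by
        intro s
        rcases s.eq_empty_or_nonempty with rfl | ⟨x0, hx0⟩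
        · simp
        have hsub : ((N s).image Sum.inl ∪ (Finset.univ.image (Sum.inr : Fin d → Y ⊕ Fin d)))
            ⊆ s.biUnion t := by
          intro z hz
          rcases Finset.mem_union.mp hz with hz | hz
          · obtain ⟨y, hy, rfl⟩ := Finset.mem_image.mp hz
            simp only [hN, Finset.mem_filter, Finset.mem_univ, true_and] at hy
            obtain ⟨x, hx, hxy⟩ := hy
            refine Finset.mem_biUnion.mpr ⟨x, hx, ?_⟩
            simp [ht, hxy]
          · obtain ⟨i, _, rfl⟩ := Finset.mem_image.mp hz
            exact Finset.mem_biUnion.mpr ⟨x0, hx0, by simp [ht]⟩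
        have hcard : ((N s).image Sum.inl ∪
            (Finset.univ.image (Sum.inr : Fin d → Y ⊕ Fin d))).card = (N s).card + d := by
          rw [Finset.card_union_of_disjoint, Finset.card_image_of_injective _ Sum.inl_injective,
            Finset.card_image_of_injective _ Sum.inr_injective, Finset.card_univ,
            Fintype.card_fin]
          simp [Finset.disjoint_left]
        have := Finset.card_le_card hsub
        rw [hcard] at this
        have := hdK s
        omega
      obtain ⟨f, hfinj, hft⟩ := (Finset.all_card_le_biUnion_card_iff_exists_injective t).mp hall
      set D : Finset X := Finset.univ.filter (fun x => (f x).isLeft) with hD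
      set φ : X → Y := fun x => Sum.elim id (fun _ => y0) (f x) with hφ
      have hmem : D.card ∈ M := by
        refine ⟨D, φ, ?_, ?_, rfl⟩
        · intro a ha b hb hab
          simp only [hD, Finset.coe_filter, Set.mem_setOf_eq] at ha hb
          obtain ⟨ya, hya⟩ := Sum.isLeft_iff.mp ha.2
          obtain ⟨yb, hyb⟩ := Sum.isLeft_iff.mp hb.2
          apply hfinj
          rw [hya, hyb]
          simpa [hφ, hya, hyb] using hab
        · intro x hx
          simp only [hD, Finset.mem_filter] at hx
          obtain ⟨y, hy⟩ := Sum.isLeft_iff.mp hx.2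
          have := hft x
          rw [hy] at this
          simp only [ht, Finset.mem_union, Finset.mem_image] at this
          rcases this with ⟨y', hy', heq⟩ | ⟨i, _, heq⟩
          · obtain rfl : y' = y := Sum.inl_injective heq
            simp only [Finset.mem_filter, Finset.mem_univ, true_and] at hy'
            simpa [hφ, hy] using hy'
          · exact absurd heq (by simp)
      have hcardD : Fintype.card X - d ≤ D.card := by
        set C : Finset X := Finset.univ.filter (fun x => ¬ (f x).isLeft) with hC
        have hsplit : D.card + C.card = Fintype.card X := by
          rw [hD, hC, Finset.card_filter_add_card_filter_not, Finset.card_univ]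
        have hCim : C.image f ⊆ Finset.univ.image (Sum.inr : Fin d → Y ⊕ Fin d) := by
          intro z hz
          obtain ⟨x, hx, rfl⟩ := Finset.mem_image.mp hz
          simp only [hC, Finset.mem_filter, Sum.not_isLeft] at hx
          obtain ⟨i, hi⟩ := Sum.isRight_iff.mp hx.2
          rw [hi]
          exact Finset.mem_image.mpr ⟨i, Finset.mem_univ _, rfl⟩
        have hCcard : C.card ≤ d := by
          have h1 : (C.image f).card = C.card := Finset.card_image_of_injective _ hfinj
          have h2 := Finset.card_le_card hCim
          rw [h1, Finset.card_image_of_injective _ Sum.inr_injective, Finset.card_univ,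
            Fintype.card_fin] at h2
          exact h2
        omega
      exact le_trans hcardD (le_csSup hMbdd hmem)
  exact le_antisymm hub hlb
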